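/- Let γ: (-2ε,2ε) → E be piecewise C¹ (with corner at 0) and set M₁ = sup_{u ∈ (-2ε,2ε) \ {0}} ‖γ′(u)‖ (assumed finite) and S₁ = sup_ℝ |σ′|. Then for every δ ∈ (0,ε] and every t ∈ (-ε,ε), ‖γ_δ′(t)‖ ≤ (1 + δ·S₁)·M₁. In particular the first derivatives of the mollified paths are bounded by a constant independent of δ. -/

import Mathlib

open MeasureTheory Set

/-- The variable mollification scale `σ_δ(t) = δ² σ(t/δ)`. -/
noncomputable def sigmaDel (σ : ℝ → ℝ) (δ t : ℝ) : ℝ := δ ^ 2 * σ (t / δ)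

/-- The variable-scale mollification `γ_δ(s) = ∫ γ(s - σ_δ(s) t) φ(t) dt` (Bochner integral). -/
noncomputable def mollify {E : Type*} [NormedAddCommGroup E] [NormedSpace ℝ E]
    (φ σ : ℝ → ℝ) (δ : ℝ) (γ : ℝ → E) (s : ℝ) : E :=
  ∫ t : ℝ, φ t • γ (s - sigmaDel σ δ s * t)

theorem mollify_deriv_bound
    {E : Type*} [NormedAddCommGroup E] [NormedSpace ℝ E] [CompleteSpace E]
    (ε : ℝ) (hε0 : 0 < ε) (hε1 : ε ≤ 1)
    (φ σ : ℝ → ℝ)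
    (hφsm : ContDiff ℝ (⊤ : ℕ∞) φ) (hφsupp : Function.support φ ⊆ Set.Icc (-1) 1)
    (hφ0 : ∀ t, 0 ≤ φ t) (hφ1 : ∀ t, φ t ≤ 1) (hφint : (∫ t : ℝ, φ t) = 1)
    (hσsm : ContDiff ℝ (⊤ : ℕ∞) σ) (hσsupp : Function.support σ ⊆ Set.Icc (-(1/2)) (1/2))
    (hσ0 : ∀ t, 0 ≤ σ t) (hσle : ∀ t, σ t ≤ 1/100)
    (hσeq : ∀ t : ℝ, |t| ≤ 1/4 → σ t = 1/100)
    (hσpos : ∀ t : ℝ, 1/4 < |t| → |t| < 1/2 → 0 < σ t)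
    (γ : ℝ → E)
    (hγcont : ContinuousOn γ (Set.Ioo (-(2*ε)) (2*ε)))
    (hγm : ContDiffOn ℝ 1 γ (Set.Ioc (-(2*ε)) 0))
    (hγp : ContDiffOn ℝ 1 γ (Set.Ico 0 (2*ε)))
    (γ' : ℝ → E)
    (hγ'1 : ∀ u ∈ Set.Ioo (-(2*ε)) (2*ε), u ≠ 0 → HasDerivAt γ (γ' u) u)
    (hγ'0 : HasDerivWithinAt γ (γ' 0) (Set.Ici 0) 0)
    (M₁ S₁ : ℝ)
    (hM₁ : M₁ = sSup ((fun u => ‖γ' u‖) '' (Set.Ioo (-(2*ε)) (2*ε) \ {0})))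
    (hM₁bd : BddAbove ((fun u => ‖γ' u‖) '' (Set.Ioo (-(2*ε)) (2*ε) \ {0})))
    (hS₁ : S₁ = ⨆ u : ℝ, |deriv σ u|)
    (δ : ℝ) (hδ0 : 0 < δ) (hδε : δ ≤ ε)
 :
    ∀ t ∈ Set.Ioo (-ε) ε, ‖deriv (mollify φ σ δ γ) t‖ ≤ (1 + δ * S₁) * M₁ := by
  have h2ε : 0 < 2 * ε := by linarith
  -- basic bounds on M₁ and S₁
  have hbound : ∀ u ∈ Set.Ioo (-(2*ε)) (2*ε), u ≠ 0 → ‖γ' u‖ ≤ M₁ := by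
    intro u hu hne
    rw [hM₁]
    exact le_csSup hM₁bd ⟨u, ⟨hu, hne⟩, rfl⟩
  have hM₁0 : 0 ≤ M₁ := by
    rw [hM₁]
    refine Real.sSup_nonneg ?_
    rintro x ⟨u, -, rfl⟩
    exact norm_nonneg _
  have hS₁0 : 0 ≤ S₁ := by
    rw [hS₁]; exact Real.iSup_nonneg fun u => abs_nonneg _
  have hσcs : HasCompactSupport σ :=
    HasCompactSupport.intro isCompact_Icc fun x hx =>
      Function.notMem_support.mp fun hmem => hx (hσsupp hmem)
  have hσd_cont : Continuous (deriv σ) := hσsm.continuous_deriv (by exact_mod_cast le_top)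
  have hS₁bdd : BddAbove (Set.range fun u => |deriv σ u|) := by
    have := hσd_cont.norm.bddAbove_range_of_hasCompactSupport hσcs.deriv.norm
    simpa [Real.norm_eq_abs] using this
  have hS₁le : ∀ u, |deriv σ u| ≤ S₁ := by
    intro u; rw [hS₁]; exact le_ciSup hS₁bdd u
  have hσdiff : Differentiable ℝ σ := hσsm.differentiable (by simp)
  -- derivative of sigmaDel
  have hδne : δ ≠ 0 := ne_of_gt hδ0
  have hsdHasDeriv : ∀ s : ℝ, HasDerivAt (sigmaDel σ δ) (δ * deriv σ (s / δ)) s := by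
    intro s
    have h1 : HasDerivAt (fun s : ℝ => s / δ) (1 / δ) s := by
      simpa using (hasDerivAt_id s).div_const δ
    have h2 : HasDerivAt σ (deriv σ (s / δ)) (s / δ) := (hσdiff (s / δ)).hasDerivAt
    have h3 : HasDerivAt (fun s : ℝ => σ (s / δ)) (deriv σ (s / δ) * (1 / δ)) s := h2.comp s h1
    have h4 := h3.const_mul (δ ^ 2)
    have heq : δ ^ 2 * (deriv σ (s / δ) * (1 / δ)) = δ * deriv σ (s / δ) := by
      field_simp
    rw [heq] at h4
    exact h4
  have hsdLip : ∀ a b : ℝ, |sigmaDel σ δ a - sigmaDel σ δ b| ≤ δ * S₁ * |a - b| := by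
    intro a b
    have := Convex.norm_image_sub_le_of_norm_hasDerivWithin_le
      (f := sigmaDel σ δ) (f' := fun s => δ * deriv σ (s / δ)) (C := δ * S₁)
      (fun x _ => (hsdHasDeriv x).hasDerivWithinAt)
      (fun x _ => by
        rw [Real.norm_eq_abs, abs_mul, abs_of_pos hδ0]
        exact mul_le_mul_of_nonneg_left (hS₁le _) hδ0.le)
      convex_univ (Set.mem_univ b) (Set.mem_univ a)
    simpa [Real.norm_eq_abs] using this
  -- bounds on sigmaDel
  have hsd0 : ∀ s, 0 ≤ sigmaDel σ δ s := fun s => mul_nonneg (sq_nonneg δ) (hσ0 _)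
  have hsdle : ∀ s, sigmaDel σ δ s ≤ ε / 100 := by
    intro s
    have h1 : sigmaDel σ δ s ≤ δ ^ 2 * (1 / 100) :=
      mul_le_mul_of_nonneg_left (hσle _) (sq_nonneg δ)
    nlinarith [sq_nonneg δ]
  -- membership of the argument in the domain of γ
  have hmem : ∀ s ∈ Set.Ioo (-ε) ε, ∀ t : ℝ, |t| ≤ 2 →
      s - sigmaDel σ δ s * t ∈ Set.Ioo (-(2*ε)) (2*ε) := by
    intro s hs t ht
    have h1 : |sigmaDel σ δ s * t| ≤ ε / 100 * 2 := by
      rw [abs_mul]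
      exact mul_le_mul (by rw [abs_of_nonneg (hsd0 s)]; exact hsdle s) ht (abs_nonneg t) (by linarith)
    have h2 := abs_le.1 h1
    obtain ⟨hs1, hs2⟩ := hs
    constructor <;> [nlinarith; nlinarith]
  -- continuity of γ at interior points
  have hγCA : ∀ u ∈ Set.Ioo (-(2*ε)) (2*ε), ContinuousAt γ u := fun u hu =>
    hγcont.continuousAt (isOpen_Ioo.mem_nhds hu)
  -- Lipschitz estimate on the right piece
  have hpos : ∀ x y : ℝ, 0 ≤ x → x ≤ y → y < 2*ε → ‖γ y - γ x‖ ≤ M₁ * (y - x) := by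
    have hpos' : ∀ x y : ℝ, 0 < x → x ≤ y → y < 2*ε → ‖γ y - γ x‖ ≤ M₁ * (y - x) := by
      intro x y hx hxy hy
      have := Convex.norm_image_sub_le_of_norm_hasDerivWithin_le
        (f := γ) (f' := γ') (C := M₁) (s := Set.Icc x y)
        (fun u hu => (hγ'1 u ⟨by nlinarith [hu.1], lt_of_le_of_lt hu.2 hy⟩
          (by nlinarith [hu.1])).hasDerivWithinAt)
        (fun u hu => hbound u ⟨by nlinarith [hu.1], lt_of_le_of_lt hu.2 hy⟩
          (by nlinarith [hu.1]))
        (convex_Icc x y) (Set.left_mem_Icc.2 hxy) (Set.right_mem_Icc.2 hxy)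
      rwa [Real.norm_eq_abs, abs_of_nonneg (by linarith)] at this
    intro x y hx hxy hy
    rcases hx.lt_or_eq with hx' | hx'
    · exact hpos' x y hx' hxy hy
    · subst hx'
      rcases hxy.lt_or_eq with hy' | hy'
      · -- limit argument as z → 0⁺
        have h0mem : (0:ℝ) ∈ Set.Ioo (-(2*ε)) (2*ε) := ⟨by linarith, by linarith⟩
        have ht1 : Filter.Tendsto (fun z => ‖γ y - γ z‖) (nhdsWithin 0 (Set.Ioi 0))
            (nhds ‖γ y - γ 0‖) :=
          ((Filter.Tendsto.sub tendsto_const_nhds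
            ((hγCA 0 h0mem).tendsto)).norm).mono_left nhdsWithin_le_nhds
        have ht2 : Filter.Tendsto (fun z : ℝ => M₁ * (y - z)) (nhdsWithin 0 (Set.Ioi 0))
            (nhds (M₁ * (y - 0))) :=
          ((Filter.Tendsto.sub tendsto_const_nhds Filter.tendsto_id).const_mul M₁).mono_left
            nhdsWithin_le_nhds
        have hev : ∀ᶠ z in nhdsWithin (0:ℝ) (Set.Ioi 0),
            ‖γ y - γ z‖ ≤ M₁ * (y - z) := by
          filter_upwards [Ioo_mem_nhdsGT_of_mem (by constructor <;> linarith :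
            (0:ℝ) ∈ Set.Ico 0 y)] with z hz
          exact hpos' z y hz.1 hz.2.le hy
        have := le_of_tendsto_of_tendsto ht1 ht2 hev
        simpa using this
      · subst hy'; simp
  -- Lipschitz estimate on the left piece
  have hneg : ∀ x y : ℝ, -(2*ε) < x → x ≤ y → y ≤ 0 → ‖γ y - γ x‖ ≤ M₁ * (y - x) := by
    have hneg' : ∀ x y : ℝ, -(2*ε) < x → x ≤ y → y < 0 → ‖γ y - γ x‖ ≤ M₁ * (y - x) := by
      intro x y hx hxy hy
      have := Convex.norm_image_sub_le_of_norm_hasDerivWithin_le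
        (f := γ) (f' := γ') (C := M₁) (s := Set.Icc x y)
        (fun u hu => (hγ'1 u ⟨lt_of_lt_of_le hx hu.1, by nlinarith [hu.2]⟩
          (by nlinarith [hu.2])).hasDerivWithinAt)
        (fun u hu => hbound u ⟨lt_of_lt_of_le hx hu.1, by nlinarith [hu.2]⟩
          (by nlinarith [hu.2]))
        (convex_Icc x y) (Set.left_mem_Icc.2 hxy) (Set.right_mem_Icc.2 hxy)
      rwa [Real.norm_eq_abs, abs_of_nonneg (by linarith)] at this
    intro x y hx hxy hy
    rcases hy.lt_or_eq with hy' | hy'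
    · exact hneg' x y hx hxy hy'
    · subst hy'
      rcases hxy.lt_or_eq with hx' | hx'
      · have h0mem : (0:ℝ) ∈ Set.Ioo (-(2*ε)) (2*ε) := ⟨by linarith, by linarith⟩
        have ht1 : Filter.Tendsto (fun z => ‖γ z - γ x‖) (nhdsWithin 0 (Set.Iio 0))
            (nhds ‖γ 0 - γ x‖) :=
          ((Filter.Tendsto.sub ((hγCA 0 h0mem).tendsto)
            tendsto_const_nhds).norm).mono_left nhdsWithin_le_nhds
        have ht2 : Filter.Tendsto (fun z : ℝ => M₁ * (z - x)) (nhdsWithin 0 (Set.Iio 0))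
            (nhds (M₁ * (0 - x))) :=
          ((Filter.Tendsto.sub Filter.tendsto_id tendsto_const_nhds).const_mul M₁).mono_left
            nhdsWithin_le_nhds
        have hev : ∀ᶠ z in nhdsWithin (0:ℝ) (Set.Iio 0),
            ‖γ z - γ x‖ ≤ M₁ * (z - x) := by
          filter_upwards [Ioo_mem_nhdsLT_of_mem (by constructor <;> linarith :
            (0:ℝ) ∈ Set.Ioc x 0)] with z hz
          exact hneg' x z hx hz.1.le hz.2
        have := le_of_tendsto_of_tendsto ht1 ht2 hev
        simpa using this
      · subst hx'; simp
  -- global Lipschitz estimate for γ on Ioo (-(2ε)) (2ε)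
  have hlipγ : ∀ a ∈ Set.Ioo (-(2*ε)) (2*ε), ∀ b ∈ Set.Ioo (-(2*ε)) (2*ε),
      ‖γ a - γ b‖ ≤ M₁ * |a - b| := by
    have H : ∀ a ∈ Set.Ioo (-(2*ε)) (2*ε), ∀ b ∈ Set.Ioo (-(2*ε)) (2*ε), b ≤ a →
        ‖γ a - γ b‖ ≤ M₁ * (a - b) := by
      intro a ha b hb hba
      rcases le_or_gt 0 b with h0b | hb0
      · exact hpos b a h0b hba ha.2
      rcases le_or_gt a 0 with ha0 | h0a
      · exact hneg b a hb.1 hba ha0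
      · have h1 : ‖γ a - γ b‖ ≤ ‖γ a - γ 0‖ + ‖γ 0 - γ b‖ := by
          have := dist_triangle (γ a) (γ 0) (γ b)
          simpa [dist_eq_norm] using this
        have h2 := hpos 0 a le_rfl h0a.le ha.2
        have h3 := hneg b 0 hb.1 hb0.le le_rfl
        calc ‖γ a - γ b‖ ≤ ‖γ a - γ 0‖ + ‖γ 0 - γ b‖ := h1
          _ ≤ M₁ * (a - 0) + M₁ * (0 - b) := add_le_add h2 h3
          _ = M₁ * (a - b) := by ring
    intro a ha b hb
    rcases le_total b a with h | h
    · rw [abs_of_nonneg (by linarith)]; exact H a ha b hb h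
    · rw [abs_of_nonpos (by linarith), norm_sub_rev]
      have := H b hb a ha h
      linarith [this]
  -- integrability of the integrand
  have hφcont : Continuous φ := hφsm.continuous
  have hφcs : HasCompactSupport φ :=
    HasCompactSupport.intro isCompact_Icc fun x hx =>
      Function.notMem_support.mp fun hmem => hx (hφsupp hmem)
  have hφInt : Integrable φ := hφcont.integrable_of_hasCompactSupport hφcs
  have hφzero : ∀ u : ℝ, 1 < |u| → φ u = 0 := by
    intro u hu
    by_contra h
    have := hφsupp (Function.mem_support.2 h)
    have : |u| ≤ 1 := abs_le.2 ⟨this.1, this.2⟩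
    linarith
  have hint : ∀ s ∈ Set.Ioo (-ε) ε,
      Integrable (fun t : ℝ => φ t • γ (s - sigmaDel σ δ s * t)) := by
    intro s hs
    have hcont : Continuous fun t : ℝ => φ t • γ (s - sigmaDel σ δ s * t) := by
      rw [continuous_iff_continuousAt]
      intro t
      rcases lt_or_ge (|t|) 2 with h | h
      · have hca : ContinuousAt (fun t : ℝ => γ (s - sigmaDel σ δ s * t)) t := by
          have hinner : ContinuousAt (fun t : ℝ => s - sigmaDel σ δ s * t) t := by fun_prop
          exact ContinuousAt.comp (g := γ) (hγCA _ (hmem s hs t h.le)) hinner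
        exact hφcont.continuousAt.smul hca
      · have hopen : IsOpen {u : ℝ | 1 < |u|} :=
          isOpen_lt continuous_const continuous_abs
        have hmem' : t ∈ {u : ℝ | 1 < |u|} := by simp only [Set.mem_setOf_eq]; linarith
        refine ContinuousAt.congr (f := fun _ : ℝ => (0:E)) continuousAt_const ?_
        filter_upwards [hopen.mem_nhds hmem'] with u hu
        simp [hφzero u hu]
    have hcs : HasCompactSupport fun t : ℝ => φ t • γ (s - sigmaDel σ δ s * t) :=
      HasCompactSupport.intro isCompact_Icc fun x hx => by
        have : φ x = 0 := Function.notMem_support.mp fun hmem => hx (hφsupp hmem)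
        simp [this]
    exact hcont.integrable_of_hasCompactSupport hcs
  set K : ℝ := (1 + δ * S₁) * M₁ with hK
  have hK0 : 0 ≤ K := mul_nonneg (by nlinarith) hM₁0
  -- the main Lipschitz estimate for mollify
  have hmain : ∀ s₁ ∈ Set.Ioo (-ε) ε, ∀ s₂ ∈ Set.Ioo (-ε) ε,
      ‖mollify φ σ δ γ s₁ - mollify φ σ δ γ s₂‖ ≤ K * |s₁ - s₂| := by
    intro s₁ hs₁ s₂ hs₂
    have h1 := hint s₁ hs₁
    have h2 := hint s₂ hs₂
    rw [mollify, mollify, ← integral_sub h1 h2]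
    refine le_trans (norm_integral_le_integral_norm _) ?_
    have hptwise : ∀ t : ℝ,
        ‖φ t • γ (s₁ - sigmaDel σ δ s₁ * t) - φ t • γ (s₂ - sigmaDel σ δ s₂ * t)‖
          ≤ φ t * (K * |s₁ - s₂|) := by
      intro t
      rw [← smul_sub, norm_smul, Real.norm_eq_abs, abs_of_nonneg (hφ0 t)]
      rcases eq_or_ne (φ t) 0 with h0 | h0
      · simp [h0]
      · have htle : |t| ≤ 1 := by
          have := hφsupp (Function.mem_support.2 h0)
          exact abs_le.2 ⟨this.1, this.2⟩
        have ht2 : |t| ≤ 2 := by linarith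
        have hm1 := hmem s₁ hs₁ t ht2
        have hm2 := hmem s₂ hs₂ t ht2
        have hγl := hlipγ _ hm1 _ hm2
        have harg : |(s₁ - sigmaDel σ δ s₁ * t) - (s₂ - sigmaDel σ δ s₂ * t)|
            ≤ (1 + δ * S₁) * |s₁ - s₂| := by
          have h3 := hsdLip s₁ s₂
          have h4 : |(sigmaDel σ δ s₁ - sigmaDel σ δ s₂) * t| ≤ δ * S₁ * |s₁ - s₂| := by
            rw [abs_mul]
            calc |sigmaDel σ δ s₁ - sigmaDel σ δ s₂| * |t|
                ≤ (δ * S₁ * |s₁ - s₂|) * 1 :=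
                  mul_le_mul h3 htle (abs_nonneg t) (by positivity)
              _ = δ * S₁ * |s₁ - s₂| := by ring
          calc |(s₁ - sigmaDel σ δ s₁ * t) - (s₂ - sigmaDel σ δ s₂ * t)|
              = |(s₁ - s₂) - (sigmaDel σ δ s₁ - sigmaDel σ δ s₂) * t| := by ring_nf
            _ ≤ |s₁ - s₂| + |(sigmaDel σ δ s₁ - sigmaDel σ δ s₂) * t| := abs_sub _ _
            _ ≤ |s₁ - s₂| + δ * S₁ * |s₁ - s₂| := by linarith
            _ = (1 + δ * S₁) * |s₁ - s₂| := by ring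
        have hchain : ‖γ (s₁ - sigmaDel σ δ s₁ * t) - γ (s₂ - sigmaDel σ δ s₂ * t)‖
            ≤ K * |s₁ - s₂| := by
          refine le_trans hγl ?_
          calc M₁ * |(s₁ - sigmaDel σ δ s₁ * t) - (s₂ - sigmaDel σ δ s₂ * t)|
              ≤ M₁ * ((1 + δ * S₁) * |s₁ - s₂|) :=
                mul_le_mul_of_nonneg_left harg hM₁0
            _ = K * |s₁ - s₂| := by rw [hK]; ring
        exact mul_le_mul_of_nonneg_left hchain (hφ0 t)
    calc (∫ t : ℝ, ‖φ t • γ (s₁ - sigmaDel σ δ s₁ * t) - φ t • γ (s₂ - sigmaDel σ δ s₂ * t)‖)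
        ≤ ∫ t : ℝ, φ t * (K * |s₁ - s₂|) :=
          integral_mono (h1.sub h2).norm (hφInt.mul_const _) hptwise
      _ = (∫ t : ℝ, φ t) * (K * |s₁ - s₂|) := integral_mul_const _ _
      _ = K * |s₁ - s₂| := by rw [hφint, one_mul]
  -- conclusion via the converse mean value inequality
  intro t ht
  have : ‖deriv (mollify φ σ δ γ) t‖ ≤ K := by
    refine norm_deriv_le_of_lip' hK0 ?_
    filter_upwards [isOpen_Ioo.mem_nhds ht] with x hx
    have := hmain x hx t ht
    simpa [Real.norm_eq_abs] using this
  exact this
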